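/- Let m ≥ 2 and let τ ∈ S_m be cluster-free. Let l ≥ 2, n ≥ l+2, let ρ ∈ S_l avoid τ, and let η ∈ S_{n-l+1} avoid τ, with η_a = k for some a and k with 1 ≤ a, k ≤ n-l+1. Define σ^ρ ∈ S_n by: σ^ρ_i = η_i if i < a and η_i < k; σ^ρ_i = η_i + l - 1 if i < a and η_i > k; σ^ρ_{a+j} = k - 1 + ρ_{j+1} for j = 0, 1, …, l-1; and for i ≥ a+l, σ^ρ_i = η_{i-l+1} if η_{i-l+1} < k and σ^ρ_i = η_{i-l+1} + l - 1 if η_{i-l+1} > k. Then σ^ρ is a permutation in S_n that avoids τ. -/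
import Mathlib

open Filter

def Contains {n m : ℕ} (σ : Fin n → Fin n) (τ : Fin m → Fin m) : Prop :=
  ∃ f : Fin m → Fin n, StrictMono f ∧ ∀ j k : Fin m, σ (f j) < σ (f k) ↔ τ j < τ k

def Avoids {n m : ℕ} (σ : Fin n → Fin n) (τ : Fin m → Fin m) : Prop :=
  ¬ Contains σ τ

def AvoidSet (n : ℕ) {m : ℕ} (τ : Equiv.Perm (Fin m)) : Set (Equiv.Perm (Fin n)) :=
  {σ : Equiv.Perm (Fin n) | Avoids ⇑σ ⇑τ}

def ClusterAt {n : ℕ} (l k a : ℕ) (σ : Equiv.Perm (Fin n)) : Prop :=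
  (Finset.univ.filter fun i : Fin n => a ≤ (i : ℕ) + 1 ∧ (i : ℕ) + 1 < a + l).image
      (fun i => (σ i : ℕ) + 1) = Finset.Ico k (k + l)

def ClusterEvent (n l k : ℕ) : Set (Equiv.Perm (Fin n)) :=
  {σ : Equiv.Perm (Fin n) | ∃ a : ℕ, 1 ≤ a ∧ a ≤ n - l + 1 ∧ ClusterAt l k a σ}

def ClusterFree {m : ℕ} (τ : Equiv.Perm (Fin m)) : Prop :=
  ∀ l a k : ℕ, 2 ≤ l → l ≤ m - 1 → 1 ≤ a → a + l ≤ m + 1 → ¬ ClusterAt l k a τ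

def ContainsTightly12 {m : ℕ} (τ : Equiv.Perm (Fin m)) : Prop :=
  ∃ i j : Fin m, (j : ℕ) = (i : ℕ) + 1 ∧ (τ j : ℕ) = (τ i : ℕ) + 1

def ContainsTightly21 {m : ℕ} (τ : Equiv.Perm (Fin m)) : Prop :=
  ∃ i j : Fin m, (j : ℕ) = (i : ℕ) + 1 ∧ (τ i : ℕ) = (τ j : ℕ) + 1

def perm123 : Equiv.Perm (Fin 3) := Equiv.refl (Fin 3)

def perm321 : Equiv.Perm (Fin 3) :=
  ⟨![2, 1, 0], ![2, 1, 0], by intro x; fin_cases x <;> rfl, by intro x; fin_cases x <;> rfl⟩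

def p2413 : Equiv.Perm (Fin 4) :=
  ⟨![1, 3, 0, 2], ![2, 0, 3, 1], by intro x; fin_cases x <;> rfl, by intro x; fin_cases x <;> rfl⟩

def p3142 : Equiv.Perm (Fin 4) :=
  ⟨![2, 0, 3, 1], ![1, 3, 0, 2], by intro x; fin_cases x <;> rfl, by intro x; fin_cases x <;> rfl⟩

def SepSet (n : ℕ) : Set (Equiv.Perm (Fin n)) :=
  {σ : Equiv.Perm (Fin n) | Avoids ⇑σ ⇑p2413 ∧ Avoids ⇑σ ⇑p3142}


def Vmap (k l x : ℕ) : ℕ := if x < k then x else x + l - 1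

lemma Vmap_strictMono (k l : ℕ) (hl : 1 ≤ l) : StrictMono (Vmap k l) := by
  intro x y h; unfold Vmap; split_ifs <;> omega

theorem expansion_pattern_avoids (m : ℕ) (hm : 2 ≤ m) (τ : Equiv.Perm (Fin m))
    (hτ : ClusterFree τ)
    (l n : ℕ) (hl : 2 ≤ l) (hn : l + 2 ≤ n)
    (ρ : Equiv.Perm (Fin l)) (hρ : Avoids ⇑ρ ⇑τ)
    (η : Equiv.Perm (Fin (n - l + 1))) (hη : Avoids ⇑η ⇑τ)
    (a k : Fin (n - l + 1)) (hak : η a = k)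
    (σ : Fin n → Fin n)
    (hσ : ∀ i : Fin n, (σ i : ℕ) =
      if hia : (i : ℕ) < (a : ℕ) then
        (if (η ⟨(i : ℕ), lt_trans hia a.isLt⟩ : ℕ) < (k : ℕ) then
          (η ⟨(i : ℕ), lt_trans hia a.isLt⟩ : ℕ)
        else (η ⟨(i : ℕ), lt_trans hia a.isLt⟩ : ℕ) + l - 1)
      else if hia2 : (i : ℕ) < (a : ℕ) + l then
        (k : ℕ) + (ρ ⟨(i : ℕ) - (a : ℕ), by omega⟩ : ℕ)
      else
        (if (η ⟨(i : ℕ) + 1 - l, by have := i.isLt; omega⟩ : ℕ) < (k : ℕ) then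
          (η ⟨(i : ℕ) + 1 - l, by have := i.isLt; omega⟩ : ℕ)
        else (η ⟨(i : ℕ) + 1 - l, by have := i.isLt; omega⟩ : ℕ) + l - 1)) :
    Function.Bijective σ ∧ Avoids σ ⇑τ := by
  have haN : (a : ℕ) < n - l + 1 := a.isLt
  have hkN : (k : ℕ) < n - l + 1 := k.isLt
  -- block value lemma
  have hblk' : ∀ (i : Fin n) (u : Fin l),
      (a : ℕ) ≤ (i : ℕ) → (i : ℕ) < (a : ℕ) + l → (u : ℕ) = (i : ℕ) - (a : ℕ) →
      (σ i : ℕ) = (k : ℕ) + (ρ u : ℕ) := by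
    intro i u h1 h2 hu
    rw [hσ i, dif_neg (by omega), dif_pos h2]
    have huu : (⟨(i : ℕ) - (a : ℕ), by omega⟩ : Fin l) = u := Fin.ext hu.symm
    rw [huu]
  have hblkr : ∀ i : Fin n, (a : ℕ) ≤ (i : ℕ) → (i : ℕ) < (a : ℕ) + l →
      (k : ℕ) ≤ (σ i : ℕ) ∧ (σ i : ℕ) < (k : ℕ) + l := by
    intro i h1 h2
    rw [hblk' i ⟨(i : ℕ) - (a : ℕ), by omega⟩ h1 h2 rfl]
    exact ⟨Nat.le_add_right _ _, Nat.add_lt_add_left (Fin.is_lt _) _⟩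
  -- nonblock value lemma
  have hnb : ∀ (i : Fin n) (t : Fin (n - l + 1)),
      (((i : ℕ) < (a : ℕ) ∧ (t : ℕ) = (i : ℕ)) ∨
        ((a : ℕ) + l ≤ (i : ℕ) ∧ (t : ℕ) = (i : ℕ) + 1 - l)) →
      (σ i : ℕ) = Vmap (k : ℕ) l (η t : ℕ) ∧ (t : ℕ) ≠ (a : ℕ) := by
    intro i t ht
    rcases ht with ⟨h1, h2⟩ | ⟨h1, h2⟩
    · refine ⟨?_, by omega⟩
      rw [hσ i, dif_pos h1]
      have htt : (⟨(i : ℕ), lt_trans h1 a.isLt⟩ : Fin (n - l + 1)) = t := Fin.ext h2.symm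
      rw [htt]
      rfl
    · refine ⟨?_, by omega⟩
      rw [hσ i, dif_neg (by omega), dif_neg (by omega)]
      have htt : (⟨(i : ℕ) + 1 - l, by have := i.isLt; omega⟩ : Fin (n - l + 1)) = t :=
        Fin.ext h2.symm
      rw [htt]
      rfl
  have hηk : ∀ t : Fin (n - l + 1), (t : ℕ) ≠ (a : ℕ) → (η t : ℕ) ≠ (k : ℕ) := by
    intro t ht hc
    have : η t = η a := by rw [hak]; exact Fin.ext hc
    exact ht (congrArg Fin.val (η.injective this))
  have hVlt : ∀ x : ℕ, (Vmap (k : ℕ) l x < (k : ℕ) ↔ x < (k : ℕ)) := by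
    intro x; unfold Vmap; split_ifs <;> omega
  have hVge : ∀ x : ℕ, x ≠ (k : ℕ) → ((k : ℕ) + l ≤ Vmap (k : ℕ) l x ↔ (k : ℕ) < x) := by
    intro x hx; unfold Vmap; split_ifs <;> omega
  -- witness existence
  have hwit : ∀ i : Fin n, ((i : ℕ) < (a : ℕ) ∨ (a : ℕ) + l ≤ (i : ℕ)) →
      ∃ t : Fin (n - l + 1), (((i : ℕ) < (a : ℕ) ∧ (t : ℕ) = (i : ℕ)) ∨
        ((a : ℕ) + l ≤ (i : ℕ) ∧ (t : ℕ) = (i : ℕ) + 1 - l)) := by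
    intro i h
    rcases h with h | h
    · exact ⟨⟨(i : ℕ), lt_trans h a.isLt⟩, Or.inl ⟨h, rfl⟩⟩
    · exact ⟨⟨(i : ℕ) + 1 - l, by have := i.isLt; omega⟩, Or.inr ⟨h, rfl⟩⟩
  -- comparison lemmas
  have hcmp_nn : ∀ (i j : Fin n) (t s : Fin (n - l + 1)),
      (((i : ℕ) < (a : ℕ) ∧ (t : ℕ) = (i : ℕ)) ∨
        ((a : ℕ) + l ≤ (i : ℕ) ∧ (t : ℕ) = (i : ℕ) + 1 - l)) →
      (((j : ℕ) < (a : ℕ) ∧ (s : ℕ) = (j : ℕ)) ∨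
        ((a : ℕ) + l ≤ (j : ℕ) ∧ (s : ℕ) = (j : ℕ) + 1 - l)) →
      ((σ i : ℕ) < (σ j : ℕ) ↔ (η t : ℕ) < (η s : ℕ)) := by
    intro i j t s hi hj
    rw [(hnb i t hi).1, (hnb j s hj).1]
    exact (Vmap_strictMono _ _ (by omega)).lt_iff_lt
  have hcmp_nb : ∀ (i j : Fin n) (t : Fin (n - l + 1)),
      (((i : ℕ) < (a : ℕ) ∧ (t : ℕ) = (i : ℕ)) ∨
        ((a : ℕ) + l ≤ (i : ℕ) ∧ (t : ℕ) = (i : ℕ) + 1 - l)) →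
      (a : ℕ) ≤ (j : ℕ) → (j : ℕ) < (a : ℕ) + l →
      ((σ i : ℕ) < (σ j : ℕ) ↔ (η t : ℕ) < (k : ℕ)) := by
    intro i j t hw h1 h2
    obtain ⟨hv, hta⟩ := hnb i t hw
    have hb := hblkr j h1 h2
    have ha1 := hVlt (η t : ℕ)
    have hk0 := hηk t hta
    have ha2 := hVge (η t : ℕ) hk0
    rw [hv]
    omega
  have hcmp_bn : ∀ (i j : Fin n) (t : Fin (n - l + 1)),
      (((j : ℕ) < (a : ℕ) ∧ (t : ℕ) = (j : ℕ)) ∨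
        ((a : ℕ) + l ≤ (j : ℕ) ∧ (t : ℕ) = (j : ℕ) + 1 - l)) →
      (a : ℕ) ≤ (i : ℕ) → (i : ℕ) < (a : ℕ) + l →
      ((σ i : ℕ) < (σ j : ℕ) ↔ (k : ℕ) < (η t : ℕ)) := by
    intro i j t hw h1 h2
    obtain ⟨hv, hta⟩ := hnb j t hw
    have hb := hblkr i h1 h2
    have ha1 := hVlt (η t : ℕ)
    have hk0 := hηk t hta
    have ha2 := hVge (η t : ℕ) hk0
    rw [hv]
    omega
  have hcmp_bb : ∀ (i j : Fin n) (u v : Fin l),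
      (a : ℕ) ≤ (i : ℕ) → (i : ℕ) < (a : ℕ) + l → (u : ℕ) = (i : ℕ) - (a : ℕ) →
      (a : ℕ) ≤ (j : ℕ) → (j : ℕ) < (a : ℕ) + l → (v : ℕ) = (j : ℕ) - (a : ℕ) →
      ((σ i : ℕ) < (σ j : ℕ) ↔ (ρ u : ℕ) < (ρ v : ℕ)) := by
    intro i j u v hi1 hi2 hu hj1 hj2 hv
    rw [hblk' i u hi1 hi2 hu, hblk' j v hj1 hj2 hv]
    omega
  -- injectivity
  have hinj : Function.Injective σ := by
    intro i j hij
    have hij' : (σ i : ℕ) = (σ j : ℕ) := congrArg Fin.val hij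
    by_cases hbi : (a : ℕ) ≤ (i : ℕ) ∧ (i : ℕ) < (a : ℕ) + l
    · by_cases hbj : (a : ℕ) ≤ (j : ℕ) ∧ (j : ℕ) < (a : ℕ) + l
      · obtain ⟨u, hu⟩ : ∃ u : Fin l, (u : ℕ) = (i : ℕ) - (a : ℕ) :=
          ⟨⟨(i : ℕ) - (a : ℕ), by omega⟩, rfl⟩
        obtain ⟨v, hv⟩ : ∃ v : Fin l, (v : ℕ) = (j : ℕ) - (a : ℕ) :=
          ⟨⟨(j : ℕ) - (a : ℕ), by omega⟩, rfl⟩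
        have hiu := hblk' i u hbi.1 hbi.2 hu
        have hjv := hblk' j v hbj.1 hbj.2 hv
        have huv : (u : ℕ) = (v : ℕ) := congrArg Fin.val (ρ.injective (Fin.ext (by omega)))
        exact Fin.ext (by omega)
      · obtain ⟨t0, hw⟩ := hwit j (by omega)
        obtain ⟨hv, hta⟩ := hnb j t0 hw
        have hb := hblkr i hbi.1 hbi.2
        have ha1 := hVlt (η t0 : ℕ)
        have ha2 := hVge (η t0 : ℕ) (hηk t0 hta)
        have := hηk t0 hta
        omega
    · by_cases hbj : (a : ℕ) ≤ (j : ℕ) ∧ (j : ℕ) < (a : ℕ) + l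
      · obtain ⟨t0, hw⟩ := hwit i (by omega)
        obtain ⟨hv, hta⟩ := hnb i t0 hw
        have hb := hblkr j hbj.1 hbj.2
        have ha1 := hVlt (η t0 : ℕ)
        have ha2 := hVge (η t0 : ℕ) (hηk t0 hta)
        have := hηk t0 hta
        omega
      · obtain ⟨ti, hwi⟩ := hwit i (by omega)
        obtain ⟨tj, hwj⟩ := hwit j (by omega)
        obtain ⟨hvi, _⟩ := hnb i ti hwi
        obtain ⟨hvj, _⟩ := hnb j tj hwj
        have hVeq : Vmap (k : ℕ) l (η ti : ℕ) = Vmap (k : ℕ) l (η tj : ℕ) := by omega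
        have : ti = tj := η.injective (Fin.ext ((Vmap_strictMono (k : ℕ) l (by omega)).injective hVeq))
        have := congrArg Fin.val this
        exact Fin.ext (by omega)
  refine ⟨Finite.injective_iff_bijective.mp hinj, ?_⟩
  -- avoidance
  intro hcon
  obtain ⟨f, hf, hord⟩ := hcon
  have hord' : ∀ p q : Fin m, ((σ (f p) : ℕ) < (σ (f q) : ℕ)) ↔ ((τ p : ℕ) < (τ q : ℕ)) :=
    fun p q => Iff.trans (Iff.symm Fin.lt_iff_val_lt_val) ((hord p q).trans Fin.lt_iff_val_lt_val)
  by_cases hall : ∀ p : Fin m, (a : ℕ) ≤ (f p : ℕ) ∧ (f p : ℕ) < (a : ℕ) + l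
  · -- all indices inside the block: occurrence of τ in ρ
    apply hρ
    refine ⟨fun p => ⟨(f p : ℕ) - (a : ℕ), by have := (hall p).1; have := (hall p).2; omega⟩, ?_, ?_⟩
    · intro p q hpq
      have h1 := (hall p).1
      have h3 : (f p : ℕ) < (f q : ℕ) := hf hpq
      simp only [Fin.mk_lt_mk]
      omega
    · intro p q
      rw [Fin.lt_iff_val_lt_val, Fin.lt_iff_val_lt_val]
      exact (hcmp_bb (f p) (f q) _ _ (hall p).1 (hall p).2 rfl (hall q).1 (hall q).2 rfl).symm.trans
        (hord' p q)
  · obtain ⟨p0, hp0⟩ := not_forall.mp hall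
    by_cases hone : ∃ p q : Fin m, p ≠ q ∧ ((a : ℕ) ≤ (f p : ℕ) ∧ (f p : ℕ) < (a : ℕ) + l) ∧
        ((a : ℕ) ≤ (f q : ℕ) ∧ (f q : ℕ) < (a : ℕ) + l)
    · -- at least two block indices: cluster in τ
      obtain ⟨p1, p2, hp12, hbp1, hbp2⟩ := hone
      set Bf : Finset (Fin m) :=
        Finset.univ.filter (fun p => (a : ℕ) ≤ (f p : ℕ) ∧ (f p : ℕ) < (a : ℕ) + l) with hBf
      have hmem : ∀ p, p ∈ Bf ↔ ((a : ℕ) ≤ (f p : ℕ) ∧ (f p : ℕ) < (a : ℕ) + l) := by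
        intro p; simp [hBf]
      have hBne : Bf.Nonempty := ⟨p1, (hmem p1).2 hbp1⟩
      have hconv : ∀ p q r : Fin m, p ∈ Bf → r ∈ Bf → p ≤ q → q ≤ r → q ∈ Bf := by
        intro p q r hp hr hpq hqr
        rw [hmem] at hp hr ⊢
        have h1 : (f p : ℕ) ≤ (f q : ℕ) := Fin.le_def.mp (hf.monotone hpq)
        have h2 : (f q : ℕ) ≤ (f r : ℕ) := Fin.le_def.mp (hf.monotone hqr)
        omega
      set c := Bf.min' hBne with hc
      set d := Bf.max' hBne with hd
      have hcB := Bf.min'_mem hBne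
      have hdB := Bf.max'_mem hBne
      have hcd : (c : ℕ) ≤ (d : ℕ) := Fin.le_def.mp (Finset.min'_le _ _ hdB)
      have hBIcc : Bf = Finset.Icc c d := by
        apply Finset.Subset.antisymm
        · intro p hp
          rw [Finset.mem_Icc]
          exact ⟨Finset.min'_le _ _ hp, Finset.le_max' _ _ hp⟩
        · intro p hp
          rw [Finset.mem_Icc] at hp
          exact hconv c p d hcB hdB hp.1 hp.2
      set s := Bf.card with hs
      have hs2 : 2 ≤ s := Finset.one_lt_card.mpr ⟨p1, (hmem p1).2 hbp1, p2, (hmem p2).2 hbp2, hp12⟩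
      have hp0B : p0 ∉ Bf := by rw [hmem]; exact hp0
      have hsm : s ≤ m - 1 := by
        have hsub : Bf ⊆ Finset.univ.erase p0 :=
          fun x hx => Finset.mem_erase.mpr ⟨fun h => hp0B (h ▸ hx), Finset.mem_univ x⟩
        have hcle := Finset.card_le_card hsub
        rw [Finset.card_erase_of_mem (Finset.mem_univ _), Finset.card_univ, Fintype.card_fin]
          at hcle
        exact hcle
      have hcard : s = (d : ℕ) - (c : ℕ) + 1 := by
        have : Bf.card = (d : ℕ) + 1 - (c : ℕ) := by rw [hBIcc, Fin.card_Icc]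
        omega
      set S := Bf.image (fun p => (τ p : ℕ)) with hS
      have hSne : S.Nonempty := hBne.image _
      set t := S.min' hSne with ht
      set M := S.max' hSne with hM
      have htM : t ≤ M := Finset.min'_le _ _ (S.max'_mem hSne)
      have hsep : ∀ p : Fin m, p ∉ Bf →
          (∀ q ∈ Bf, (τ p : ℕ) < (τ q : ℕ)) ∨ (∀ q ∈ Bf, (τ q : ℕ) < (τ p : ℕ)) := by
        intro p hp
        rw [hmem] at hp
        obtain ⟨t0, hw⟩ := hwit (f p) (by omega)
        have hta := (hnb (f p) t0 hw).2
        rcases lt_or_gt_of_ne (hηk t0 hta) with h | h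
        · left
          intro q hq
          rw [hmem] at hq
          exact (hord' p q).mp ((hcmp_nb (f p) (f q) t0 hw hq.1 hq.2).mpr h)
        · right
          intro q hq
          rw [hmem] at hq
          exact (hord' q p).mp ((hcmp_bn (f q) (f p) t0 hw hq.1 hq.2).mpr h)
      have hScard : S.card = s := Finset.card_image_of_injOn
        (fun x _ y _ hxy => τ.injective (Fin.ext hxy))
      have hSIcc : S = Finset.Icc t M := by
        apply Finset.Subset.antisymm
        · intro v hv
          rw [Finset.mem_Icc]
          exact ⟨Finset.min'_le _ _ hv, Finset.le_max' _ _ hv⟩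
        · intro v hv
          rw [Finset.mem_Icc] at hv
          obtain ⟨qM, hqM, hqMv⟩ := Finset.mem_image.mp (S.max'_mem hSne)
          have hMm : M < m := by have := (τ qM).isLt; omega
          have hvm : v < m := by omega
          by_cases hpB : τ.symm ⟨v, hvm⟩ ∈ Bf
          · have : (τ (τ.symm ⟨v, hvm⟩) : ℕ) = v := by rw [Equiv.apply_symm_apply]
            rw [hS]
            exact this ▸ Finset.mem_image_of_mem _ hpB
          · exfalso
            obtain ⟨qt, hqt, hqtv⟩ := Finset.mem_image.mp (S.min'_mem hSne)
            have hτv : (τ (τ.symm ⟨v, hvm⟩) : ℕ) = v := by rw [Equiv.apply_symm_apply]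
            rcases hsep _ hpB with h | h
            · have := h qt hqt; omega
            · have := h qM hqM; omega
      have hMts : M + 1 - t = s := by
        have : S.card = M + 1 - t := by rw [hSIcc, Nat.card_Icc]
        omega
      refine hτ s ((c : ℕ) + 1) (t + 1) (by omega) (by omega) (by omega)
        (by have := d.isLt; omega) ?_
      unfold ClusterAt
      have hfilter : (Finset.univ.filter fun i : Fin m =>
          (c : ℕ) + 1 ≤ (i : ℕ) + 1 ∧ (i : ℕ) + 1 < (c : ℕ) + 1 + s) = Bf := by
        rw [hBIcc]
        ext i
        simp only [Finset.mem_filter, Finset.mem_univ, true_and, Finset.mem_Icc]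
        rw [Fin.le_def, Fin.le_def]
        omega
      rw [hfilter]
      have himg : Bf.image (fun i => (τ i : ℕ) + 1) = S.image (· + 1) := by
        rw [hS, Finset.image_image]
        rfl
      rw [himg, hSIcc]
      ext v
      simp only [Finset.mem_image, Finset.mem_Icc, Finset.mem_Ico]
      constructor
      · rintro ⟨x, hx, rfl⟩; omega
      · intro hv; exact ⟨v - 1, by omega, by omega⟩
    · -- at most one block index: occurrence of τ in η
      set g : Fin m → Fin (n - l + 1) := fun p =>
        if hb : (f p : ℕ) < (a : ℕ) then ⟨(f p : ℕ), lt_trans hb a.isLt⟩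
        else if hb2 : (f p : ℕ) < (a : ℕ) + l then a
        else ⟨(f p : ℕ) + 1 - l, by have := (f p).isLt; omega⟩ with hgdef
      have hgv : ∀ p, ((f p : ℕ) < (a : ℕ) ∧ (g p : ℕ) = (f p : ℕ)) ∨
          ((a : ℕ) ≤ (f p : ℕ) ∧ (f p : ℕ) < (a : ℕ) + l ∧ (g p : ℕ) = (a : ℕ)) ∨
          ((a : ℕ) + l ≤ (f p : ℕ) ∧ (g p : ℕ) = (f p : ℕ) + 1 - l) := by
        intro p
        simp only [hgdef]
        split_ifs with h1 h2
        · exact Or.inl ⟨h1, rfl⟩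
        · exact Or.inr (Or.inl ⟨by omega, h2, rfl⟩)
        · exact Or.inr (Or.inr ⟨by omega, rfl⟩)
      refine hη ⟨g, ?_, ?_⟩
      · intro p q hpq
        have hfpq : (f p : ℕ) < (f q : ℕ) := hf hpq
        rw [Fin.lt_iff_val_lt_val]
        rcases hgv p with ⟨hp1, hp2⟩ | ⟨hp1, hp2, hp3⟩ | ⟨hp1, hp2⟩ <;>
          rcases hgv q with ⟨hq1, hq2⟩ | ⟨hq1, hq2, hq3⟩ | ⟨hq1, hq2⟩ <;>
          first
            | omega
            | exact absurd ⟨p, q, ne_of_lt hpq, ⟨hp1, hp2⟩, hq1, hq2⟩ hone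
      · intro p q
        rw [Fin.lt_iff_val_lt_val, Fin.lt_iff_val_lt_val]
        rcases hgv p with ⟨hp1, hp2⟩ | ⟨hp1, hp2, hp3⟩ | ⟨hp1, hp2⟩ <;>
          rcases hgv q with ⟨hq1, hq2⟩ | ⟨hq1, hq2, hq3⟩ | ⟨hq1, hq2⟩
        · exact (hcmp_nn (f p) (f q) (g p) (g q) (Or.inl ⟨hp1, hp2⟩) (Or.inl ⟨hq1, hq2⟩)).symm.trans
            (hord' p q)
        · rw [show g q = a from Fin.ext hq3, hak]
          exact (hcmp_nb (f p) (f q) (g p) (Or.inl ⟨hp1, hp2⟩) hq1 hq2).symm.trans (hord' p q)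
        · exact (hcmp_nn (f p) (f q) (g p) (g q) (Or.inl ⟨hp1, hp2⟩) (Or.inr ⟨hq1, hq2⟩)).symm.trans
            (hord' p q)
        · rw [show g p = a from Fin.ext hp3, hak]
          exact (hcmp_bn (f p) (f q) (g q) (Or.inl ⟨hq1, hq2⟩) hp1 hp2).symm.trans (hord' p q)
        · rcases eq_or_ne p q with rfl | hne
          · omega
          · exact absurd ⟨p, q, hne, ⟨hp1, hp2⟩, hq1, hq2⟩ hone
        · rw [show g p = a from Fin.ext hp3, hak]
          exact (hcmp_bn (f p) (f q) (g q) (Or.inr ⟨hq1, hq2⟩) hp1 hp2).symm.trans (hord' p q)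
        · exact (hcmp_nn (f p) (f q) (g p) (g q) (Or.inr ⟨hp1, hp2⟩) (Or.inl ⟨hq1, hq2⟩)).symm.trans
            (hord' p q)
        · rw [show g q = a from Fin.ext hq3, hak]
          exact (hcmp_nb (f p) (f q) (g p) (Or.inr ⟨hp1, hp2⟩) hq1 hq2).symm.trans (hord' p q)
        · exact (hcmp_nn (f p) (f q) (g p) (g q) (Or.inr ⟨hp1, hp2⟩) (Or.inr ⟨hq1, hq2⟩)).symm.trans
            (hord' p q)
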